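/- (Weighted POD error identity) Let Y be a real inner product space and G : X → Y a linear map. Then for every 0 ≤ l ≤ d_p, (1/M) Σ_{j=1}^M ‖G u_j − Σ_{k=1}^l ⟨u_j, ψ_k⟩ G ψ_k‖² = Σ_{k=l+1}^{d_p} λ_k ‖G ψ_k‖². -/

import Mathlib

open scoped RealInnerProductSpace
open Finset

/-- Weighted POD error identity:
`(1/M) Σ_j ‖G u_j − Σ_{k ≤ l} ⟪u_j, ψ_k⟫ G ψ_k‖² = Σ_{l < k ≤ dp} λ_k ‖G ψ_k‖²`. -/
theorem pod_weighted_error_identity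
    {X : Type*} [NormedAddCommGroup X] [InnerProductSpace ℝ X]
    (M : ℕ) (hM : 1 ≤ M) (u : Fin M → X)
    (K : Matrix (Fin M) (Fin M) ℝ)
    (hK : ∀ i j, K i j = (1 / (M : ℝ)) * ⟪u i, u j⟫)
    (v : Fin M → Fin M → ℝ)
    (hvON : ∀ k l, ∑ j, v k j * v l j = if k = l then (1 : ℝ) else 0)
    (lam : Fin M → ℝ)
    (heig : ∀ k, K.mulVec (v k) = lam k • v k)
    (hmono : ∀ k l : Fin M, k ≤ l → lam l ≤ lam k)
    (hnonneg : ∀ k, 0 ≤ lam k)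
    (dp : ℕ) (hdpM : dp ≤ M)
    (hpos : ∀ k : Fin M, (k : ℕ) < dp → 0 < lam k)
    (hzero : ∀ k : Fin M, dp ≤ (k : ℕ) → lam k = 0)
    (ψ : Fin M → X)
    (hψ : ∀ k : Fin M, ψ k =
      (Real.sqrt M * Real.sqrt (lam k))⁻¹ • ∑ j, v k j • u j)
    {Y : Type*} [NormedAddCommGroup Y] [InnerProductSpace ℝ Y]
    (G : X →ₗ[ℝ] Y)
    (l : ℕ) (hl : l ≤ dp) :
    (1 / (M : ℝ)) * ∑ j, ‖G (u j) -
        ∑ k ∈ univ.filter (fun k : Fin M => (k : ℕ) < l), ⟪u j, ψ k⟫ • G (ψ k)‖ ^ 2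
      = ∑ k ∈ univ.filter (fun k : Fin M => l ≤ (k : ℕ) ∧ (k : ℕ) < dp),
          lam k * ‖G (ψ k)‖ ^ 2 := by
  classical
  have hM0 : (0:ℝ) < M := by exact_mod_cast hM
  have hMne : (M:ℝ) ≠ 0 := ne_of_gt hM0
  -- column orthonormality
  have hVVt : (Matrix.of v) * (Matrix.of v).transpose = 1 := by
    ext k l
    simp [Matrix.mul_apply, Matrix.one_apply, hvON k l]
  have hVtV : (Matrix.of v).transpose * (Matrix.of v) = 1 := by
    rwa [mul_eq_one_comm] at hVVt
  have hcol : ∀ i i' : Fin M, ∑ k, v k i * v k i' = if i = i' then (1:ℝ) else 0 := by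
    intro i i'
    have := congrFun (congrFun hVtV i) i'
    simpa [Matrix.mul_apply, Matrix.one_apply] using this
  have hinner_uu : ∀ i j, ⟪u i, u j⟫ = (M:ℝ) * K i j := by
    intro i j; rw [hK]; field_simp
  set w : Fin M → X := fun k => ∑ i, v k i • u i with hw
  have h_uw : ∀ j k, ⟪u j, w k⟫ = (M:ℝ) * (lam k * v k j) := by
    intro j k
    have hmv := congrFun (heig k) j
    simp only [Matrix.mulVec, dotProduct, Pi.smul_apply, smul_eq_mul] at hmv
    calc ⟪u j, w k⟫ = ∑ i, v k i * ⟪u j, u i⟫ := by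
          simp [hw, inner_sum, real_inner_smul_right]
      _ = (M:ℝ) * ∑ i, K j i * v k i := by
          simp only [hinner_uu]; rw [Finset.mul_sum]; congr 1; ext i; ring
      _ = (M:ℝ) * (lam k * v k j) := by rw [hmv]
  have h_ww : ∀ k k', ⟪w k, w k'⟫ = (M:ℝ) * lam k' * (if k = k' then 1 else 0) := by
    intro k k'
    calc ⟪w k, w k'⟫ = ∑ i, v k i * ⟪u i, w k'⟫ := by
          simp [hw, sum_inner, real_inner_smul_left]
      _ = ∑ i, v k i * ((M:ℝ) * (lam k' * v k' i)) := by
          simp only [h_uw]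
      _ = (M:ℝ) * lam k' * ∑ i, v k i * v k' i := by
          rw [Finset.mul_sum]; congr 1; ext i; ring
      _ = _ := by rw [hvON k k']
  set a : Fin M → ℝ := fun k => Real.sqrt M * Real.sqrt (lam k) with ha
  have ha2 : ∀ k, a k * a k = (M:ℝ) * lam k := by
    intro k
    simp only [ha]
    rw [mul_mul_mul_comm, Real.mul_self_sqrt (le_of_lt hM0),
      Real.mul_self_sqrt (hnonneg k)]
  have hane : ∀ k : Fin M, (k:ℕ) < dp → a k ≠ 0 := by
    intro k hk
    have h1 : (0:ℝ) < Real.sqrt M := Real.sqrt_pos.mpr hM0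
    have h2 : (0:ℝ) < Real.sqrt (lam k) := Real.sqrt_pos.mpr (hpos k hk)
    exact ne_of_gt (mul_pos h1 h2)
  have hψ' : ∀ k : Fin M, ψ k = (a k)⁻¹ • w k := by
    intro k; rw [hψ k]
  have hw_zero : ∀ k : Fin M, dp ≤ (k:ℕ) → w k = 0 := by
    intro k hk
    have h0 : ⟪w k, w k⟫ = 0 := by rw [h_ww, hzero k hk]; simp
    exact inner_self_eq_zero.mp h0
  have hw_eq : ∀ k, w k = a k • ψ k := by
    intro k
    by_cases hk : (k:ℕ) < dp
    · rw [hψ' k, smul_smul, mul_inv_cancel₀ (hane k hk), one_smul]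
    · have hk' := le_of_not_gt hk
      have ha0 : a k = 0 := by
        simp only [ha]; rw [hzero k hk', Real.sqrt_zero, mul_zero]
      rw [hw_zero k hk', ha0, zero_smul]
  have hdecomp : ∀ j, u j = ∑ k, v k j • w k := by
    intro j
    have h1 : ∑ k, v k j • w k = ∑ i, (∑ k, v k j * v k i) • u i := by
      simp only [hw, Finset.smul_sum, smul_smul]
      rw [Finset.sum_comm]
      simp only [Finset.sum_smul]
    rw [h1]
    simp only [hcol, ite_smul, one_smul, zero_smul, Finset.sum_ite_eq,
      Finset.mem_univ, if_true]
  have hc : ∀ (j k : Fin M), (k:ℕ) < dp → ⟪u j, ψ k⟫ = a k * v k j := by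
    intro j k hk
    have h3 : (M:ℝ) * (lam k * v k j) = a k * (a k * v k j) := by
      rw [← mul_assoc, ← ha2 k, mul_assoc]
    rw [hψ' k, real_inner_smul_right, h_uw j k, h3,
      inv_mul_cancel_left₀ (hane k hk)]
  -- rewrite the residual as a sum over k with l ≤ k
  have hS : ∀ j : Fin M,
      G (u j) - ∑ k ∈ univ.filter (fun k : Fin M => (k : ℕ) < l), ⟪u j, ψ k⟫ • G (ψ k)
      = ∑ k ∈ univ.filter (fun k : Fin M => ¬ (k : ℕ) < l), (v k j * a k) • G (ψ k) := by
    intro j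
    have h1 : G (u j) = ∑ k, (v k j * a k) • G (ψ k) := by
      rw [hdecomp j, map_sum]
      refine Finset.sum_congr rfl fun k _ => ?_
      rw [hw_eq k, map_smul, map_smul, smul_smul]
    have h2 : ∑ k ∈ univ.filter (fun k : Fin M => (k : ℕ) < l), ⟪u j, ψ k⟫ • G (ψ k)
        = ∑ k ∈ univ.filter (fun k : Fin M => (k : ℕ) < l), (v k j * a k) • G (ψ k) := by
      refine Finset.sum_congr rfl fun k hk => ?_
      simp only [Finset.mem_filter, Finset.mem_univ, true_and] at hk
      rw [hc j k (lt_of_lt_of_le hk hl), mul_comm]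
    rw [h1, h2, ← Finset.sum_filter_add_sum_filter_not Finset.univ
      (fun k : Fin M => (k : ℕ) < l) (fun k => (v k j * a k) • G (ψ k))]
    abel
  have hnorm : ∀ j, ‖∑ k ∈ univ.filter (fun k : Fin M => ¬ (k : ℕ) < l),
        (v k j * a k) • G (ψ k)‖ ^ 2
      = ∑ k ∈ univ.filter (fun k : Fin M => ¬ (k : ℕ) < l),
          ∑ k' ∈ univ.filter (fun k : Fin M => ¬ (k : ℕ) < l),
            (v k j * a k) * (v k' j * a k') * ⟪G (ψ k), G (ψ k')⟫ := by
    intro j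
    rw [← real_inner_self_eq_norm_sq, sum_inner]
    refine Finset.sum_congr rfl fun k _ => ?_
    rw [real_inner_smul_left, inner_sum, Finset.mul_sum]
    refine Finset.sum_congr rfl fun k' _ => ?_
    rw [real_inner_smul_right]; ring
  have hsum : ∑ j, ‖∑ k ∈ univ.filter (fun k : Fin M => ¬ (k : ℕ) < l),
        (v k j * a k) • G (ψ k)‖ ^ 2
      = ∑ k ∈ univ.filter (fun k : Fin M => ¬ (k : ℕ) < l),
          ((M:ℝ) * lam k) * ‖G (ψ k)‖ ^ 2 := by
    simp only [hnorm]
    rw [Finset.sum_comm]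
    refine Finset.sum_congr rfl fun k hk => ?_
    rw [Finset.sum_comm]
    have hinner : ∀ k' ∈ univ.filter (fun k : Fin M => ¬ (k : ℕ) < l),
        ∑ j, (v k j * a k) * (v k' j * a k') * ⟪G (ψ k), G (ψ k')⟫
        = if k = k' then (a k * a k' * ⟪G (ψ k), G (ψ k')⟫) else 0 := by
      intro k' _
      have : ∑ j, (v k j * a k) * (v k' j * a k') * ⟪G (ψ k), G (ψ k')⟫
          = (∑ j, v k j * v k' j) * (a k * a k' * ⟪G (ψ k), G (ψ k')⟫) := by
        rw [Finset.sum_mul]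
        refine Finset.sum_congr rfl fun j _ => ?_
        ring
      rw [this, hvON k k']
      split <;> simp
    rw [Finset.sum_congr rfl hinner, Finset.sum_ite_eq, if_pos hk, ha2 k,
      real_inner_self_eq_norm_sq]
  simp only [hS]
  rw [hsum, Finset.mul_sum]
  have hterm : ∀ k : Fin M, (1 / (M:ℝ)) * (((M:ℝ) * lam k) * ‖G (ψ k)‖ ^ 2)
      = lam k * ‖G (ψ k)‖ ^ 2 := by
    intro k; field_simp
  simp only [hterm]
  refine (Finset.sum_subset ?_ ?_).symm
  · intro k hk
    simp only [Finset.mem_filter, Finset.mem_univ, true_and] at hk ⊢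
    omega
  · intro k hk hnk
    simp only [Finset.mem_filter, Finset.mem_univ, true_and] at hk hnk
    have : dp ≤ (k:ℕ) := by omega
    rw [hzero k this, zero_mul]
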